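/- arXiv:1605.02219 — 3 statements merged into one kernel-verified Lean document; each statement's English description precedes it below -/
import Mathlib

section
/- Let K = ⊕_{i=1}^n K_i and H = ⊕_{i=1}^n H_i be orthogonal direct sums of finite-dimensional complex Hilbert spaces, and let φ : B(K) → B(H) be a positive map such that φ(B(K_i)) ⊆ B(H_i) for each i (i.e., φ maps operators supported on the i-th diagonal block to operators supported on the i-th diagonal block). Then for all i ≠ j, φ maps B(K_j, K_i) (operators supported on block (i,j)) into B(H_j, H_i) ⊕ B(H_i, H_j) (operators supported on the union of blocks (i,j) and (j,i)). -/
open scoped ComplexOrder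
open Matrix

noncomputable section
namespace Paper

/-- A map between matrix algebras is positive if it sends positive semidefinite
matrices to positive semidefinite matrices. -/
def IsPosMap {m n : Type*} [Fintype m] [Fintype n]
    (φ : Matrix m m ℂ → Matrix n n ℂ) : Prop :=
  ∀ X : Matrix m m ℂ, X.PosSemidef → (φ X).PosSemidef

/-- The rank one operator `ηη*`, i.e. `ζ ↦ ⟨η, ζ⟩ η`. -/
def rankOne {m : Type*} (η : m → ℂ) : Matrix m m ℂ :=
  Matrix.vecMulVec η (star η)

/-- The Choi matrix `∑ E_{ij} ⊗ φ(E_{ij})` of a map `φ`. -/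
def choi {m n : Type*} [Fintype m] [DecidableEq m]
    (φ : Matrix m m ℂ → Matrix n n ℂ) : Matrix (m × n) (m × n) ℂ :=
  Matrix.of fun p q => φ (Matrix.single p.1 q.1 1) p.2 q.2

/-- A map is completely positive iff its Choi matrix is positive semidefinite. -/
def IsCP {m n : Type*} [Fintype m] [DecidableEq m] [Fintype n]
    (φ : Matrix m m ℂ → Matrix n n ℂ) : Prop :=
  (choi φ).PosSemidef

/-- A map is completely copositive iff `X ↦ φ(Xᵀ)` is completely positive. -/
def IsCCP {m n : Type*} [Fintype m] [DecidableEq m] [Fintype n]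
    (φ : Matrix m m ℂ → Matrix n n ℂ) : Prop :=
  IsCP fun X => φ Xᵀ

/-- A map is decomposable iff it is the sum of a completely positive and a
completely copositive (linear) map. -/
def Decomposable {m n : Type*} [Fintype m] [DecidableEq m] [Fintype n]
    (φ : Matrix m m ℂ → Matrix n n ℂ) : Prop :=
  ∃ φ₁ φ₂ : Matrix m m ℂ →ₗ[ℂ] Matrix n n ℂ,
    IsCP (⇑φ₁) ∧ IsCCP (⇑φ₂) ∧ ∀ X, φ X = φ₁ X + φ₂ X

/-- The ampliation `id_{M₂(ℂ)} ⊗ φ`. -/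
def ampl2 {m n : Type*} (φ : Matrix m m ℂ → Matrix n n ℂ)
    (Y : Matrix (Fin 2 × m) (Fin 2 × m) ℂ) : Matrix (Fin 2 × n) (Fin 2 × n) ℂ :=
  Matrix.of fun p q => φ (Matrix.of fun a b => Y (p.1, a) (q.1, b)) p.2 q.2

/-- The ampliation `tran_{M₂(ℂ)} ⊗ φ`. -/
def ampl2T {m n : Type*} (φ : Matrix m m ℂ → Matrix n n ℂ)
    (Y : Matrix (Fin 2 × m) (Fin 2 × m) ℂ) : Matrix (Fin 2 × n) (Fin 2 × n) ℂ :=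
  Matrix.of fun p q => φ (Matrix.of fun a b => Y (q.1, a) (p.1, b)) p.2 q.2

/-- `φ` is 2-positive if `id_{M₂(ℂ)} ⊗ φ` is positive. -/
def Is2Pos {m n : Type*} [Fintype m] [Fintype n]
    (φ : Matrix m m ℂ → Matrix n n ℂ) : Prop :=
  IsPosMap (ampl2 φ)

/-- `φ` is 2-copositive if `tran_{M₂(ℂ)} ⊗ φ` is positive. -/
def Is2Copos {m n : Type*} [Fintype m] [Fintype n]
    (φ : Matrix m m ℂ → Matrix n n ℂ) : Prop :=
  IsPosMap (ampl2T φ)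

/-- A positive map `φ` is exposed if every positive (linear) map `ψ` vanishing
(in the sense `⟨y, ψ(ηη*) y⟩ = 0`) wherever `φ` vanishes is a nonnegative
multiple of `φ`. -/
def IsExposed {m n : Type*} [Fintype m] [Fintype n]
    (φ : Matrix m m ℂ → Matrix n n ℂ) : Prop :=
  IsPosMap φ ∧
    ∀ ψ : Matrix m m ℂ →ₗ[ℂ] Matrix n n ℂ, IsPosMap ⇑ψ →
      (∀ (η : m → ℂ) (y : n → ℂ),
        star y ⬝ᵥ (φ (rankOne η)).mulVec y = 0 →
          star y ⬝ᵥ (ψ (rankOne η)).mulVec y = 0) →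
      ∃ c : ℝ, 0 ≤ c ∧ ∀ X, ψ X = (c : ℂ) • φ X

/-- A positive map `φ` is optimal if there is no nonzero completely positive map
`ψ` with `φ − ψ` positive. -/
def IsOptimal {m n : Type*} [Fintype m] [DecidableEq m] [Fintype n]
    (φ : Matrix m m ℂ → Matrix n n ℂ) : Prop :=
  ¬∃ ψ : Matrix m m ℂ →ₗ[ℂ] Matrix n n ℂ,
      ψ ≠ 0 ∧ IsCP (⇑ψ) ∧ IsPosMap fun X => φ X - ψ X

/-- The index type of the direct sum `ℂᵃ ⊕ ℂᵇ ⊕ ℂ`. -/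
abbrev TI (a b : ℕ) := Fin a ⊕ (Fin b ⊕ Unit)

/-- The index of the distinguished one-dimensional summand. -/
def tidx {a b : ℕ} : TI a b := Sum.inr (Sum.inr ())

/-- Block `X₁₁` of a matrix on `ℂᵃ ⊕ ℂᵇ ⊕ ℂ`. -/
def blk11 {a b : ℕ} (X : Matrix (TI a b) (TI a b) ℂ) : Matrix (Fin a) (Fin a) ℂ :=
  Matrix.of fun i j => X (Sum.inl i) (Sum.inl j)

/-- Block `X₂₂`. -/
def blk22 {a b : ℕ} (X : Matrix (TI a b) (TI a b) ℂ) : Matrix (Fin b) (Fin b) ℂ :=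
  Matrix.of fun i j => X (Sum.inr (Sum.inl i)) (Sum.inr (Sum.inl j))

/-- Block `X₁₃`, viewed as a column vector. -/
def blk13 {a b : ℕ} (X : Matrix (TI a b) (TI a b) ℂ) : Fin a → ℂ :=
  fun i => X (Sum.inl i) tidx

/-- Block `X₃₁` (equivalently, the vector `X₃₁ᵀ`). -/
def blk31 {a b : ℕ} (X : Matrix (TI a b) (TI a b) ℂ) : Fin a → ℂ :=
  fun i => X tidx (Sum.inl i)

/-- Block `X₂₃`, viewed as a column vector. -/
def blk23 {a b : ℕ} (X : Matrix (TI a b) (TI a b) ℂ) : Fin b → ℂ :=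
  fun i => X (Sum.inr (Sum.inl i)) tidx

/-- Block `X₃₂` (equivalently, the vector `X₃₂ᵀ`). -/
def blk32 {a b : ℕ} (X : Matrix (TI a b) (TI a b) ℂ) : Fin b → ℂ :=
  fun i => X tidx (Sum.inr (Sum.inl i))

/-- `P` is the orthogonal projection onto the range of `A`: it is Hermitian,
idempotent, and has the same range as `A`. -/
def IsOrthProjOnRange {n m : Type*} [Fintype n] [Fintype m]
    (P : Matrix n n ℂ) (A : Matrix n m ℂ) : Prop :=
  P.IsHermitian ∧ P * P = P ∧
    LinearMap.range P.mulVecLin = LinearMap.range A.mulVecLin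

/-- The merging of the maps `φ₁`, `φ₂` by means of the operators `B₁, C₁, B₂, C₂`,
the functionals `ω₁, ω₂`, with `P₁, P₂` the orthogonal projections onto the ranges
of `φ₁(1)`, `φ₂(1)`. -/
def merging {k₁ k₂ h₁ h₂ : ℕ}
    (φ₁ : Matrix (Fin k₁) (Fin k₁) ℂ →ₗ[ℂ] Matrix (Fin h₁) (Fin h₁) ℂ)
    (φ₂ : Matrix (Fin k₂) (Fin k₂) ℂ →ₗ[ℂ] Matrix (Fin h₂) (Fin h₂) ℂ)
    (B₁ C₁ : Matrix (Fin h₁) (Fin k₁) ℂ) (B₂ C₂ : Matrix (Fin h₂) (Fin k₂) ℂ)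
    (ω₁ : Matrix (Fin k₁) (Fin k₁) ℂ →ₗ[ℂ] ℂ) (ω₂ : Matrix (Fin k₂) (Fin k₂) ℂ →ₗ[ℂ] ℂ)
    (P₁ : Matrix (Fin h₁) (Fin h₁) ℂ) (P₂ : Matrix (Fin h₂) (Fin h₂) ℂ)
    (X : Matrix (TI k₁ k₂) (TI k₁ k₂) ℂ) : Matrix (TI h₁ h₂) (TI h₁ h₂) ℂ :=
  Matrix.of fun p q =>
    match p, q with
    | Sum.inl a, Sum.inl b => φ₁ (blk11 X) a b + ω₂ (blk22 X) * P₁ a b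
    | Sum.inl _, Sum.inr (Sum.inl _) => 0
    | Sum.inl a, Sum.inr (Sum.inr _) => (B₁.mulVec (blk13 X) + C₁.mulVec (blk31 X)) a
    | Sum.inr (Sum.inl _), Sum.inl _ => 0
    | Sum.inr (Sum.inl a), Sum.inr (Sum.inl b) => φ₂ (blk22 X) a b + ω₁ (blk11 X) * P₂ a b
    | Sum.inr (Sum.inl a), Sum.inr (Sum.inr _) => (B₂.mulVec (blk23 X) + C₂.mulVec (blk32 X)) a
    | Sum.inr (Sum.inr _), Sum.inl b =>
        (Matrix.vecMul (blk31 X) B₁ᴴ + Matrix.vecMul (blk13 X) C₁ᴴ) b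
    | Sum.inr (Sum.inr _), Sum.inr (Sum.inl b) =>
        (Matrix.vecMul (blk32 X) B₂ᴴ + Matrix.vecMul (blk23 X) C₂ᴴ) b
    | Sum.inr (Sum.inr _), Sum.inr (Sum.inr _) => X tidx tidx

/-- The quantity `μᵢ(η, y) = √⟨y, φᵢ(ηη*) y⟩`. -/
def muQ {k h : ℕ} (φ : Matrix (Fin k) (Fin k) ℂ →ₗ[ℂ] Matrix (Fin h) (Fin h) ℂ)
    (η : Fin k → ℂ) (y : Fin h → ℂ) : ℝ :=
  Real.sqrt (star y ⬝ᵥ (φ (rankOne η)).mulVec y).re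

/-- The quantity `εᵢ(η, y) = |⟨y, Bη⟩| + |⟨y, C η̄⟩|`. -/
def epsQ {k h : ℕ} (B C : Matrix (Fin h) (Fin k) ℂ) (η : Fin k → ℂ) (y : Fin h → ℂ) : ℝ :=
  ‖star y ⬝ᵥ B.mulVec η‖ + ‖star y ⬝ᵥ C.mulVec (star η)‖

/-- The quantity `δᵢ(η, y) = √(μᵢ(η,y)² − εᵢ(η,y)²)`. -/
def deltaQ {k h : ℕ} (φ : Matrix (Fin k) (Fin k) ℂ →ₗ[ℂ] Matrix (Fin h) (Fin h) ℂ)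
    (B C : Matrix (Fin h) (Fin k) ℂ) (η : Fin k → ℂ) (y : Fin h → ℂ) : ℝ :=
  Real.sqrt (muQ φ η y ^ 2 - epsQ B C η y ^ 2)

/-- The quantity `σᵢ(η, y) = √(ωᵢ(ηη*))·‖P y‖`. -/
def sigmaQ {k h : ℕ} (ω : Matrix (Fin k) (Fin k) ℂ →ₗ[ℂ] ℂ)
    (P : Matrix (Fin h) (Fin h) ℂ) (η : Fin k → ℂ) (y : Fin h → ℂ) : ℝ :=
  Real.sqrt (ω (rankOne η)).re * Real.sqrt (star (P.mulVec y) ⬝ᵥ P.mulVec y).re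

private noncomputable def qf {κ : Type*} [Fintype κ] (M : Matrix κ κ ℂ) (v : κ → ℂ) : ℂ :=
  star v ⬝ᵥ M.mulVec v

private lemma qf_nonneg {κ : Type*} [Fintype κ] {M : Matrix κ κ ℂ} (h : M.PosSemidef)
    (v : κ → ℂ) : 0 ≤ qf M v := h.dotProduct_mulVec_nonneg v

private lemma qf_add {κ : Type*} [Fintype κ] (M N : Matrix κ κ ℂ) (v : κ → ℂ) :
    qf (M + N) v = qf M v + qf N v := by
  simp [qf, Matrix.add_mulVec, dotProduct_add]

private lemma qf_smul {κ : Type*} [Fintype κ] (c : ℂ) (M : Matrix κ κ ℂ) (v : κ → ℂ) :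
    qf (c • M) v = c * qf M v := by
  simp [qf, Matrix.smul_mulVec, dotProduct_smul]

private lemma qf_single {κ : Type*} [Fintype κ] [DecidableEq κ] (M : Matrix κ κ ℂ) (a : κ) :
    qf M (Pi.single a 1) = M a a := by
  simp [qf, Matrix.mulVec_single, ← Pi.single_star, dotProduct, Pi.single_apply]

private lemma qf_pair {κ : Type*} [Fintype κ] [DecidableEq κ] (M : Matrix κ κ ℂ) {a b : κ}
    (hab : a ≠ b) (c : ℂ) :
    qf M (Pi.single a 1 + c • (Pi.single b 1 : κ → ℂ)) =
      M a a + c * M a b + (starRingEnd ℂ c) * M b a + (starRingEnd ℂ c) * c * M b b := by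
  simp only [qf, star_add, star_smul, Matrix.mulVec_add, Matrix.mulVec_smul,
    Matrix.mulVec_single, dotProduct_add, add_dotProduct, smul_dotProduct,
    ← Pi.single_star, star_one]
  simp [dotProduct, Pi.single_apply, Finset.mul_sum, hab, hab.symm, Complex.star_def,
    mul_comm, smul_eq_mul]
  ring

private lemma aux_real (r s : ℝ) (hr : 0 ≤ r) (h : ∀ t : ℝ, 0 < t → 0 ≤ s + t * r) : 0 ≤ s := by
  by_contra h'
  push_neg at h'
  have ht : (0:ℝ) < -s / (r + 1) := div_pos (by linarith) (by linarith)
  have := h _ ht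
  have h2 : -s / (r + 1) * r < -s := by
    rw [div_mul_eq_mul_div, div_lt_iff₀ (by linarith)]
    nlinarith
  linarith

private lemma aux_complex (d m : ℂ) (hd : 0 ≤ d)
    (h : ∀ t : ℝ, 0 < t → 0 ≤ m + (t:ℂ) * d) : 0 ≤ m := by
  rw [Complex.le_def] at hd ⊢
  simp only [Complex.zero_re, Complex.zero_im] at hd ⊢
  have h1 := h 1 one_pos
  rw [Complex.le_def] at h1
  simp only [Complex.zero_re, Complex.zero_im, Complex.add_im, Complex.mul_im,
    Complex.ofReal_re, Complex.ofReal_im] at h1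
  have him : m.im = 0 := by
    have := h1.2
    rw [← hd.2] at this
    linarith [this]
  refine ⟨?_, him.symm⟩
  apply aux_real d.re m.re hd.1
  intro t ht
  have := h t ht
  rw [Complex.le_def] at this
  simp only [Complex.zero_re, Complex.add_re, Complex.mul_re, Complex.ofReal_re,
    Complex.ofReal_im, ← hd.2] at this
  linarith [this.1]

set_option maxHeartbeats 1000000 in
/-- Lemma on off-diagonal blocks. If a positive map `φ` on a
direct sum maps each diagonal block into the corresponding diagonal block, then
it maps each off-diagonal block `(i,j)` into the union of the blocks `(i,j)`
and `(j,i)`. -/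
theorem statement9 {N : ℕ} (k h : Fin N → ℕ)
    (φ : Matrix ((i : Fin N) × Fin (k i)) ((i : Fin N) × Fin (k i)) ℂ →ₗ[ℂ]
      Matrix ((i : Fin N) × Fin (h i)) ((i : Fin N) × Fin (h i)) ℂ)
    (hpos : IsPosMap ⇑φ)
    (hdiag : ∀ i : Fin N, ∀ X, (∀ a b, ¬(a.1 = i ∧ b.1 = i) → X a b = 0) →
      ∀ a b, ¬(a.1 = i ∧ b.1 = i) → φ X a b = 0) :
    ∀ i j : Fin N, i ≠ j → ∀ X, (∀ a b, ¬(a.1 = i ∧ b.1 = j) → X a b = 0) →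
      ∀ a b, ¬((a.1 = i ∧ b.1 = j) ∨ (a.1 = j ∧ b.1 = i)) → φ X a b = 0 := by
  classical
  intro i j hij X hX a b hab
  set P : Matrix ((i : Fin N) × Fin (k i)) ((i : Fin N) × Fin (k i)) ℂ :=
    Matrix.of fun u v => if u = v ∧ u.1 = i then 1 else 0 with hPdef
  have hPsupp : ∀ u v, ¬(u.1 = i ∧ v.1 = i) → P u v = 0 := by
    intro u v huv
    simp only [hPdef, Matrix.of_apply, ite_eq_right_iff]
    rintro ⟨rfl, hu⟩
    exact absurd ⟨hu, hu⟩ huv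
  have hmv : ∀ (x : ((i : Fin N) × Fin (k i)) → ℂ) u,
      P.mulVec x u = if u.1 = i then x u else 0 := by
    intro x u
    simp only [Matrix.mulVec, dotProduct, hPdef, Matrix.of_apply]
    rw [Finset.sum_eq_single u]
    · by_cases hu : u.1 = i <;> simp [hu]
    · intro w _ hw
      simp [Ne.symm hw]
    · simp
  have hPpsd : P.PosSemidef := by
    refine Matrix.PosSemidef.of_dotProduct_mulVec_nonneg ?_ ?_
    · ext u v
      by_cases huv : u = v
      · subst huv; simp [hPdef, Matrix.conjTranspose_apply]
      · simp [hPdef, Matrix.conjTranspose_apply, huv, Ne.symm huv]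
    · intro x
      have : star x ⬝ᵥ P.mulVec x = ∑ u, if u.1 = i then star (x u) * x u else 0 := by
        simp only [dotProduct, Pi.star_apply]
        refine Finset.sum_congr rfl fun u _ => ?_
        rw [hmv]
        split <;> simp
      rw [this]
      refine Finset.sum_nonneg fun u _ => ?_
      split
      · exact star_mul_self_nonneg _
      · exact le_refl 0
  have hPX : P * X = X := by
    ext u v
    simp only [Matrix.mul_apply, hPdef, Matrix.of_apply]
    rw [Finset.sum_eq_single u]
    · by_cases hu : u.1 = i
      · simp [hu]
      · simp [hu, hX u v (fun hc => hu hc.1)]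
    · intro w _ hw; simp [Ne.symm hw]
    · simp
  have hXP : Xᴴ * P = Xᴴ := by
    ext u v
    simp only [Matrix.mul_apply, hPdef, Matrix.of_apply, Matrix.conjTranspose_apply]
    rw [Finset.sum_eq_single v]
    · by_cases hv : v.1 = i
      · simp [hv]
      · simp [hv, hX v u (fun hc => hv hc.1)]
    · intro w _ hw; simp [hw]
    · simp
  have hPP : P * P = P := by
    ext u v
    simp only [Matrix.mul_apply, hPdef, Matrix.of_apply]
    rw [Finset.sum_eq_single u]
    · by_cases hu : u = v <;> by_cases hui : u.1 = i <;> simp_all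
    · intro w _ hw; simp [Ne.symm hw]
    · simp
  set Q := Xᴴ * X with hQdef
  have hQpsd : Q.PosSemidef := Matrix.posSemidef_conjTranspose_mul_self X
  have hQsupp : ∀ u v, ¬(u.1 = j ∧ v.1 = j) → Q u v = 0 := by
    intro u v huv
    simp only [hQdef, Matrix.mul_apply, Matrix.conjTranspose_apply]
    refine Finset.sum_eq_zero fun w _ => ?_
    by_cases hu : u.1 = j
    · have hv : ¬ v.1 = j := fun hv => huv ⟨hu, hv⟩
      rw [hX w v (fun hc => hv hc.2), mul_zero]
    · rw [hX w u (fun hc => hu hc.2), star_zero, zero_mul]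
  have hcomb : ∀ (t : ℝ), 0 < t → ∀ lam : ℂ, starRingEnd ℂ lam * lam = 1 →
      ((t:ℂ) • P + (t:ℂ)⁻¹ • Q + lam • X + starRingEnd ℂ lam • Xᴴ).PosSemidef := by
    intro t ht lam hlam
    have hst : (0:ℝ) < Real.sqrt t := Real.sqrt_pos.2 ht
    have hstC : ((Real.sqrt t : ℝ) : ℂ) ≠ 0 := by
      exact_mod_cast hst.ne'
    set B := ((Real.sqrt t : ℝ) : ℂ) • P + (lam / ((Real.sqrt t : ℝ) : ℂ)) • X with hBdef
    have : Bᴴ * B = (t:ℂ) • P + (t:ℂ)⁻¹ • Q + lam • X + starRingEnd ℂ lam • Xᴴ := by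
      have hPh : Pᴴ = P := hPpsd.isHermitian
      rw [hBdef]
      rw [Matrix.conjTranspose_add, Matrix.conjTranspose_smul, Matrix.conjTranspose_smul, hPh]
      rw [Matrix.add_mul, Matrix.mul_add, Matrix.mul_add]
      rw [Matrix.smul_mul, Matrix.smul_mul, Matrix.smul_mul, Matrix.smul_mul,
        Matrix.mul_smul, Matrix.mul_smul, Matrix.mul_smul, Matrix.mul_smul]
      rw [hPP, hPX, hXP, ← hQdef]
      rw [smul_smul, smul_smul, smul_smul, smul_smul]
      have e1 : star (((Real.sqrt t : ℝ) : ℂ)) * ((Real.sqrt t : ℝ) : ℂ) = (t:ℂ) := by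
        rw [Complex.star_def, Complex.conj_ofReal, ← Complex.ofReal_mul,
          Real.mul_self_sqrt ht.le]
      have e2 : star (((Real.sqrt t : ℝ) : ℂ)) * (lam / ((Real.sqrt t : ℝ) : ℂ)) = lam := by
        rw [Complex.star_def, Complex.conj_ofReal]
        field_simp
      have e3 : star (lam / ((Real.sqrt t : ℝ) : ℂ)) * ((Real.sqrt t : ℝ) : ℂ)
          = starRingEnd ℂ lam := by
        rw [star_div₀, Complex.star_def, Complex.conj_ofReal]
        field_simp
      have e4 : star (lam / ((Real.sqrt t : ℝ) : ℂ)) * (lam / ((Real.sqrt t : ℝ) : ℂ))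
          = (t:ℂ)⁻¹ := by
        rw [star_div₀, Complex.star_def, Complex.conj_ofReal, div_mul_div_comm, hlam]
        rw [← Complex.ofReal_mul, Real.mul_self_sqrt ht.le]
        simp
      rw [e1, e2, e3, e4]
      abel
    rw [← this]
    exact Matrix.posSemidef_conjTranspose_mul_self B
  have hFPsupp := hdiag i P hPsupp
  have hFQsupp := hdiag j Q hQsupp
  have hFPpsd : (φ P).PosSemidef := hpos P hPpsd
  have hFQpsd : (φ Q).PosSemidef := hpos Q hQpsd
  -- the key vanishing property of the quadratic forms
  have key : ∀ v, (qf (φ P) v = 0 ∨ qf (φ Q) v = 0) →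
      ∀ lam : ℂ, starRingEnd ℂ lam * lam = 1 →
        lam * qf (φ X) v + starRingEnd ℂ lam * qf (φ Xᴴ) v = 0 := by
    intro v hv lam hlam
    have big : ∀ (mu : ℂ), starRingEnd ℂ mu * mu = 1 → ∀ t : ℝ, 0 < t →
        0 ≤ (t:ℂ) * qf (φ P) v + (t:ℂ)⁻¹ * qf (φ Q) v + mu * qf (φ X) v
            + starRingEnd ℂ mu * qf (φ Xᴴ) v := by
      intro mu hmu t ht
      have h1 := hpos _ (hcomb t ht mu hmu)
      have h2 := qf_nonneg h1 v
      rwa [map_add, map_add, map_add, _root_.map_smul, _root_.map_smul, _root_.map_smul, _root_.map_smul,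
        qf_add, qf_add, qf_add, qf_smul, qf_smul, qf_smul, qf_smul] at h2
    have pos : ∀ (mu : ℂ), starRingEnd ℂ mu * mu = 1 →
        0 ≤ mu * qf (φ X) v + starRingEnd ℂ mu * qf (φ Xᴴ) v := by
      intro mu hmu
      rcases hv with hv | hv
      · refine aux_complex (qf (φ Q) v) _ (qf_nonneg hFQpsd v) fun t ht => ?_
        have := big mu hmu t⁻¹ (by positivity)
        rw [hv] at this
        have hcast : ((t⁻¹ : ℝ) : ℂ)⁻¹ = (t:ℂ) := by push_cast; simp
        rw [hcast] at this
        convert this using 1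
        ring
      · refine aux_complex (qf (φ P) v) _ (qf_nonneg hFPpsd v) fun t ht => ?_
        have := big mu hmu t ht
        rw [hv] at this
        convert this using 1
        ring
    have h1 := pos lam hlam
    have h2 := pos (-lam) (by rw [map_neg, neg_mul_neg]; exact hlam)
    have h2' : 0 ≤ -(lam * qf (φ X) v + starRingEnd ℂ lam * qf (φ Xᴴ) v) := by
      convert h2 using 1
      rw [map_neg]
      ring
    exact le_antisymm (neg_nonneg.mp h2') h1
  -- which blocks vanish
  have hside : (a.1 ≠ i ∧ b.1 ≠ i) ∨ (a.1 ≠ j ∧ b.1 ≠ j) := by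
    by_contra hcon
    push_neg at hcon
    obtain ⟨h1, h2⟩ := hcon
    by_cases hai : a.1 = i
    · by_cases haj : a.1 = j
      · exact hij (by rw [← hai, haj])
      · exact hab (Or.inl ⟨hai, h2 haj⟩)
    · have hbi := h1 hai
      by_cases haj : a.1 = j
      · exact hab (Or.inr ⟨haj, hbi⟩)
      · exact hij (by rw [← hbi, h2 haj])
  obtain ⟨G, hGor, hGaa, hGab, hGba, hGbb⟩ :
      ∃ G, (G = φ P ∨ G = φ Q) ∧ G a a = 0 ∧ G a b = 0 ∧ G b a = 0 ∧ G b b = 0 := by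
    rcases hside with ⟨h1, h2⟩ | ⟨h1, h2⟩
    · exact ⟨φ P, Or.inl rfl, hFPsupp a a (fun hc => h1 hc.1),
        hFPsupp a b (fun hc => h1 hc.1), hFPsupp b a (fun hc => h2 hc.1),
        hFPsupp b b (fun hc => h2 hc.1)⟩
    · exact ⟨φ Q, Or.inr rfl, hFQsupp a a (fun hc => h1 hc.1),
        hFQsupp a b (fun hc => h1 hc.1), hFQsupp b a (fun hc => h2 hc.1),
        hFQsupp b b (fun hc => h2 hc.1)⟩
  have hi1 : starRingEnd ℂ (1:ℂ) * 1 = 1 := by simp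
  have hiI : starRingEnd ℂ Complex.I * Complex.I = 1 := by
    simp [Complex.conj_I]
  by_cases hab' : a = b
  · -- diagonal entry
    subst hab'
    have hv : qf (φ P) (Pi.single a 1) = 0 ∨ qf (φ Q) (Pi.single a 1) = 0 := by
      rcases hGor with rfl | rfl
      · left; rw [qf_single]; exact hGaa
      · right; rw [qf_single]; exact hGaa
    have e1 := key _ hv 1 hi1
    have e2 := key _ hv Complex.I hiI
    rw [qf_single, qf_single] at e1 e2
    rw [_root_.map_one, one_mul, one_mul] at e1
    rw [Complex.conj_I] at e2
    have e2' : Complex.I * (φ X a a - φ Xᴴ a a) = 0 := by linear_combination e2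
    have e2'' : φ X a a - φ Xᴴ a a = 0 := by
      rcases mul_eq_zero.mp e2' with h | h
      · exact absurd h Complex.I_ne_zero
      · exact h
    linear_combination (e1 + e2'') / 2
  · -- off-diagonal entry
    have hqG : ∀ c : ℂ, qf G (Pi.single a 1 + c • (Pi.single b 1 : _ → ℂ)) = 0 := by
      intro c
      rw [qf_pair G hab', hGaa, hGab, hGba, hGbb]
      ring
    have hvp : ∀ c : ℂ, qf (φ P) (Pi.single a 1 + c • (Pi.single b 1 : _ → ℂ)) = 0 ∨
        qf (φ Q) (Pi.single a 1 + c • (Pi.single b 1 : _ → ℂ)) = 0 := by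
      intro c
      rcases hGor with rfl | rfl
      · exact Or.inl (hqG c)
      · exact Or.inr (hqG c)
    have hvs : ∀ u, G u u = 0 → (qf (φ P) (Pi.single u 1) = 0 ∨ qf (φ Q) (Pi.single u 1) = 0) := by
      intro u hu
      rcases hGor with rfl | rfl
      · left; rw [qf_single]; exact hu
      · right; rw [qf_single]; exact hu
    set Y := φ X with hYdef
    set Z := φ Xᴴ with hZdef
    have ea1 := key _ (hvs a hGaa) 1 hi1
    have eb1 := key _ (hvs b hGbb) 1 hi1
    have eaI := key _ (hvs a hGaa) Complex.I hiI
    have ebI := key _ (hvs b hGbb) Complex.I hiI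
    have ep11 := key _ (hvp 1) 1 hi1
    have ep1I := key _ (hvp Complex.I) 1 hi1
    have epI1 := key _ (hvp 1) Complex.I hiI
    have epII := key _ (hvp Complex.I) Complex.I hiI
    rw [qf_single, qf_single, _root_.map_one, one_mul, one_mul] at ea1
    rw [qf_single, qf_single, _root_.map_one, one_mul, one_mul] at eb1
    rw [qf_single, qf_single, Complex.conj_I] at eaI
    rw [qf_single, qf_single, Complex.conj_I] at ebI
    rw [qf_pair Y hab', qf_pair Z hab', _root_.map_one, one_mul, one_mul] at ep11
    rw [qf_pair Y hab', qf_pair Z hab', _root_.map_one, one_mul, one_mul, Complex.conj_I] at ep1I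
    rw [qf_pair Y hab', qf_pair Z hab', _root_.map_one, Complex.conj_I] at epI1
    rw [qf_pair Y hab', qf_pair Z hab', Complex.conj_I] at epII
    have hU1 : (Y a b + Z a b) + (Y b a + Z b a) = 0 := by
      linear_combination ep11 - ea1 - eb1
    have hV1 : Complex.I * ((Y a b + Z a b) - (Y b a + Z b a)) = 0 := by
      linear_combination ep1I - ea1 - eb1 + (Y b b + Z b b) * Complex.I_mul_I
    have hV1' : (Y a b + Z a b) - (Y b a + Z b a) = 0 := by
      rcases mul_eq_zero.mp hV1 with h | h
      · exact absurd h Complex.I_ne_zero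
      · exact h
    have hS1 : Y a b + Z a b = 0 := by linear_combination (hU1 + hV1') / 2
    have hUI : Complex.I * ((Y a b - Z a b) + (Y b a - Z b a)) = 0 := by
      linear_combination epI1 - eaI - ebI
    have hUI' : (Y a b - Z a b) + (Y b a - Z b a) = 0 := by
      rcases mul_eq_zero.mp hUI with h | h
      · exact absurd h Complex.I_ne_zero
      · exact h
    have hVI : (Y a b - Z a b) - (Y b a - Z b a) = 0 := by
      linear_combination -(epII - eaI - ebI) + (Y a b - Y b a - Z a b + Z b a
        - Complex.I * Y b b + Complex.I * Z b b) * Complex.I_mul_I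
    have hSI : Y a b - Z a b = 0 := by linear_combination (hUI' + hVI) / 2
    show Y a b = 0
    linear_combination (hS1 + hSI) / 2

end Paper
end
end

section
/- Let K = K₁ ⊕ ℂε and H = H₁ ⊕ ℂe, where ε ∈ K and e ∈ H are unit vectors, K₁, H₁ finite-dimensional complex Hilbert spaces. Let φ : B(K) → B(H) be a positive map with φ(B(K₁)) ⊆ B(H₁) and φ(B(ℂε)) ⊆ B(ℂe). Then there exist linear maps R, Q : K₁ → H₁ such that φ(ηε*) = (Rη)e* + e(Qη̄)* for all η ∈ K₁. -/
open scoped ComplexOrder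
open Matrix

noncomputable section
namespace Paper

/-- The distinguished unit vector spanning the one-dimensional summand of
`ℂᵏ ⊕ ℂ`. -/
def unitVec (k : ℕ) : (Fin k ⊕ Unit) → ℂ := Sum.elim 0 fun _ => 1



private lemma real_lin_zero (f s g : ℝ) (hc : f = 0 ∨ g = 0)
    (h : ∀ t : ℝ, 0 ≤ t ^ 2 * f + t * s + g) : s = 0 := by
  rcases hc with hf | hg
  · subst hf
    by_contra hs
    have h0 := h 0
    have := h (-(g + 1) / s)
    have hs2 : s ≠ 0 := hs
    field_simp at this
    rw [le_div_iff₀ (lt_of_le_of_ne (sq_nonneg s) (Ne.symm (pow_ne_zero 2 hs2)))] at this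
    nlinarith [h 0, lt_of_le_of_ne (sq_nonneg s) (Ne.symm (pow_ne_zero 2 hs2))]
  · subst hg
    have hf0 : 0 ≤ f := by nlinarith [h 1, h (-1)]
    have hpos : 0 < f + 1 := by linarith
    have hkey : (f + 1) ^ 2 * ((-s / (f + 1)) ^ 2 * f + (-s / (f + 1)) * s + 0) = -s ^ 2 := by
      field_simp
      ring
    have h3 : 0 ≤ -s ^ 2 := by
      rw [← hkey]
      exact mul_nonneg (by positivity) (h _)
    have h4 : s ^ 2 = 0 := le_antisymm (by linarith) (sq_nonneg s)
    exact pow_eq_zero_iff (two_ne_zero) |>.mp h4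

private lemma complex_lin_zero (f s g : ℂ) (hc : f = 0 ∨ g = 0)
    (h : ∀ t : ℝ, 0 ≤ (t : ℂ) ^ 2 * f + (t : ℂ) * s + g) : s = 0 := by
  have him : ∀ t : ℝ, t ^ 2 * f.im + t * s.im + g.im = 0 := by
    intro t
    have := (Complex.nonneg_iff.mp (h t)).2
    simpa [← Complex.ofReal_pow] using this.symm
  have hgim : g.im = 0 := by simpa using him 0
  have h1 := him 1
  have h2 := him (-1)
  have hsim : s.im = 0 := by nlinarith [him 1, him (-1)]
  have hre : ∀ t : ℝ, 0 ≤ t ^ 2 * f.re + t * s.re + g.re := by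
    intro t
    have := (Complex.nonneg_iff.mp (h t)).1
    simpa [← Complex.ofReal_pow] using this
  have hsre : s.re = 0 := by
    refine real_lin_zero f.re s.re g.re ?_ hre
    rcases hc with hf | hg
    · exact Or.inl (by simp [hf])
    · exact Or.inr (by simp [hg])
  exact Complex.ext hsre hsim

private lemma quad_coeff_zero {f a b g : ℂ}
    (h : ∀ z : ℂ, 0 ≤ z * star z * f + z * a + star z * b + g)
    (hc : f = 0 ∨ g = 0) : a = 0 := by
  have h1 : a + b = 0 := by
    refine complex_lin_zero f _ g hc ?_
    intro t
    have e : (t : ℂ) ^ 2 * f + (t : ℂ) * (a + b) + g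
        = (t : ℂ) * star (t : ℂ) * f + (t : ℂ) * a + star (t : ℂ) * b + g := by
      rw [Complex.star_def, Complex.conj_ofReal]; ring
    rw [e]; exact h t
  have h2 : Complex.I * a - Complex.I * b = 0 := by
    refine complex_lin_zero f _ g hc ?_
    intro t
    have e : (t : ℂ) ^ 2 * f + (t : ℂ) * (Complex.I * a - Complex.I * b) + g
        = ((t : ℂ) * Complex.I) * star ((t : ℂ) * Complex.I) * f
          + ((t : ℂ) * Complex.I) * a + star ((t : ℂ) * Complex.I) * b + g := by
      simp only [star_mul', Complex.star_def, Complex.conj_ofReal, Complex.conj_I]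
      linear_combination ((t : ℂ) ^ 2 * f) * Complex.I_mul_I
    rw [e]; exact h ((t : ℂ) * Complex.I)
  linear_combination h1 / 2 - Complex.I / 2 * h2 + (a - b) / 2 * Complex.I_mul_I

private lemma quadform_eq_zero {n : Type*} [Fintype n] [DecidableEq n]
    (N : Matrix n n ℂ) (h : ∀ w : n → ℂ, star w ⬝ᵥ N.mulVec w = 0) : N = 0 := by
  have hB : ∀ u v : n → ℂ, star u ⬝ᵥ N.mulVec v = 0 := by
    intro u v
    have h1 := h (u + v)
    have h2 := h (u + Complex.I • v)
    have hu := h u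
    have hv := h v
    simp only [star_add, star_smul, Matrix.mulVec_add, Matrix.mulVec_smul,
      dotProduct_add, add_dotProduct, smul_dotProduct, dotProduct_smul,
      Complex.star_def, Complex.conj_I, smul_eq_mul, RCLike.star_def] at h1 h2
    linear_combination h1 / 2 - Complex.I / 2 * h2 + Complex.I / 2 * hu
      + Complex.I / 2 * hv - hu / 2 - hv / 2
      + (((star u ⬝ᵥ N.mulVec v) - (star v ⬝ᵥ N.mulVec u)) / 2
        - Complex.I / 2 * (star v ⬝ᵥ N.mulVec v)) * Complex.I_mul_I
  ext a b
  have := hB (Pi.single a 1) (Pi.single b 1)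
  simpa [dotProduct, Matrix.mulVec, Pi.single_apply, apply_ite (star : ℂ → ℂ),
    Finset.sum_ite_eq', Finset.sum_ite_eq] using this

private lemma posSemidef_vecMulVec_star {n : Type*} [Fintype n] (v : n → ℂ) :
    (Matrix.vecMulVec v (star v)).PosSemidef := by
  refine Matrix.PosSemidef.of_dotProduct_mulVec_nonneg ?_ ?_
  · ext i j
    simp [Matrix.conjTranspose_apply, Matrix.vecMulVec_apply, mul_comm]
  · intro x
    have e : star x ⬝ᵥ (Matrix.vecMulVec v (star v)).mulVec x
        = star (star v ⬝ᵥ x) * (star v ⬝ᵥ x) := by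
      simp only [dotProduct, Matrix.mulVec, Matrix.vecMulVec_apply, star_sum, star_mul',
        star_star, Pi.star_apply, Finset.sum_mul, Finset.mul_sum]
      rw [Finset.sum_comm]
      refine Finset.sum_congr rfl fun i _ => Finset.sum_congr rfl fun j _ => by ring
    rw [e]
    exact star_mul_self_nonneg _


/-- Corollary. Let `φ : B(K₁ ⊕ ℂε) → B(H₁ ⊕ ℂe)` be a
positive map preserving the two diagonal blocks. Then there are linear maps
`R, Q : K₁ → H₁` with `φ(ηε*) = (Rη)e* + e(Qη̄)*` for all `η ∈ K₁`. -/
theorem statement10 {k h : ℕ}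
    (φ : Matrix (Fin k ⊕ Unit) (Fin k ⊕ Unit) ℂ →ₗ[ℂ]
      Matrix (Fin h ⊕ Unit) (Fin h ⊕ Unit) ℂ)
    (hpos : IsPosMap ⇑φ)
    (h1 : ∀ X : Matrix (Fin k ⊕ Unit) (Fin k ⊕ Unit) ℂ,
      ((∀ b, X (Sum.inr ()) b = 0) ∧ (∀ a, X a (Sum.inr ()) = 0)) →
      (∀ b, φ X (Sum.inr ()) b = 0) ∧ (∀ a, φ X a (Sum.inr ()) = 0))
    (h2 : ∀ X : Matrix (Fin k ⊕ Unit) (Fin k ⊕ Unit) ℂ,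
      ((∀ (a : Fin k) (b), X (Sum.inl a) b = 0) ∧ (∀ (a) (b : Fin k), X a (Sum.inl b) = 0)) →
      (∀ (a : Fin h) (b), φ X (Sum.inl a) b = 0) ∧ (∀ (a) (b : Fin h), φ X a (Sum.inl b) = 0)) :
    ∃ R Q : Matrix (Fin h) (Fin k) ℂ, ∀ η : Fin k → ℂ,
      φ (Matrix.vecMulVec (Sum.elim η 0) (star (unitVec k))) =
        Matrix.vecMulVec (Sum.elim (R.mulVec η) 0) (star (unitVec h)) +
          Matrix.vecMulVec (unitVec h) (star (Sum.elim (Q.mulVec (star η)) 0)) := by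
  classical
  -- Key vanishing lemma
  have key : ∀ η : Fin k → ℂ,
      (∀ a b : Fin h,
        φ (Matrix.vecMulVec (Sum.elim η 0) (star (unitVec k))) (Sum.inl a) (Sum.inl b) = 0) ∧
      φ (Matrix.vecMulVec (Sum.elim η 0) (star (unitVec k))) (Sum.inr ()) (Sum.inr ()) = 0 := by
    intro η
    set X11 : Matrix (Fin k ⊕ Unit) (Fin k ⊕ Unit) ℂ :=
      Matrix.vecMulVec (Sum.elim η 0) (star (Sum.elim η 0)) with hX11
    set Xc : Matrix (Fin k ⊕ Unit) (Fin k ⊕ Unit) ℂ :=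
      Matrix.vecMulVec (Sum.elim η 0) (star (unitVec k)) with hXc
    set Xr : Matrix (Fin k ⊕ Unit) (Fin k ⊕ Unit) ℂ :=
      Matrix.vecMulVec (unitVec k) (star (Sum.elim η 0)) with hXr
    set Xe : Matrix (Fin k ⊕ Unit) (Fin k ⊕ Unit) ℂ :=
      Matrix.vecMulVec (unitVec k) (star (unitVec k)) with hXe
    have hdecomp : ∀ z : ℂ,
        Matrix.vecMulVec (Sum.elim (z • η) (fun _ => 1) : Fin k ⊕ Unit → ℂ)
            (star (Sum.elim (z • η) (fun _ => 1) : Fin k ⊕ Unit → ℂ))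
          = (z * star z) • X11 + z • Xc + star z • Xr + Xe := by
      intro z
      ext p q
      rcases p with a | ⟨⟩ <;> rcases q with b | ⟨⟩ <;>
        · simp only [hX11, hXc, hXr, hXe, Matrix.add_apply, Matrix.smul_apply,
            Matrix.vecMulVec_apply, Pi.star_apply, Sum.elim_inl, Sum.elim_inr, unitVec,
            Pi.smul_apply, smul_eq_mul, star_mul', star_zero, star_one, Pi.zero_apply,
            Pi.one_apply]
          ring
    have hq : ∀ (y : Fin h ⊕ Unit → ℂ) (z : ℂ),
        0 ≤ z * star z * (star y ⬝ᵥ (φ X11).mulVec y)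
          + z * (star y ⬝ᵥ (φ Xc).mulVec y)
          + star z * (star y ⬝ᵥ (φ Xr).mulVec y)
          + star y ⬝ᵥ (φ Xe).mulVec y := by
      intro y z
      have hP := hpos _ (posSemidef_vecMulVec_star (Sum.elim (z • η) (fun _ => 1)))
      rw [hdecomp z] at hP
      have h0 := hP.dotProduct_mulVec_nonneg y
      simpa [_root_.map_add, _root_.map_smul, Matrix.add_mulVec, Matrix.smul_mulVec,
        dotProduct_add, dotProduct_smul, smul_eq_mul] using h0
    have hF : (∀ b, φ X11 (Sum.inr ()) b = 0) ∧ (∀ a, φ X11 a (Sum.inr ()) = 0) := by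
      refine h1 X11 ⟨?_, ?_⟩ <;> intro x <;>
        simp [hX11, Matrix.vecMulVec_apply]
    have hC : (∀ (a : Fin h) (b), φ Xe (Sum.inl a) b = 0) ∧
        (∀ (a) (b : Fin h), φ Xe a (Sum.inl b) = 0) := by
      refine h2 Xe ⟨?_, ?_⟩ <;> intro x y <;>
        simp [hXe, Matrix.vecMulVec_apply, unitVec]
    constructor
    · -- block (inl, inl) vanishes
      intro a b
      have hCz : ∀ w : Fin h → ℂ,
          star (Sum.elim w 0 : Fin h ⊕ Unit → ℂ) ⬝ᵥ
            (φ Xe).mulVec (Sum.elim w 0 : Fin h ⊕ Unit → ℂ) = 0 := by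
        intro w
        simp [dotProduct, Matrix.mulVec, Fintype.sum_sum_type, hC.1]
      have hA0 : ∀ w : Fin h → ℂ,
          star (Sum.elim w 0 : Fin h ⊕ Unit → ℂ) ⬝ᵥ
            (φ Xc).mulVec (Sum.elim w 0 : Fin h ⊕ Unit → ℂ) = 0 :=
        fun w => quad_coeff_zero (hq (Sum.elim w 0)) (Or.inr (hCz w))
      have hN : (Matrix.of fun a b => φ Xc (Sum.inl a) (Sum.inl b) :
          Matrix (Fin h) (Fin h) ℂ) = 0 := by
        apply quadform_eq_zero
        intro w
        rw [← hA0 w]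
        simp [dotProduct, Matrix.mulVec, Fintype.sum_sum_type]
      have := congrFun (congrFun hN a) b
      simpa using this
    · -- corner entry vanishes
      have hf0 : star (unitVec h) ⬝ᵥ (φ X11).mulVec (unitVec h) = 0 := by
        have hF' : ∀ (x : Unit) b, φ X11 (Sum.inr x) b = 0 := fun x b => by
          cases x; exact hF.1 b
        simp [dotProduct, Matrix.mulVec, unitVec, Fintype.sum_sum_type, hF']
      have ha := quad_coeff_zero (hq (unitVec h)) (Or.inl hf0)
      have he : star (unitVec h) ⬝ᵥ (φ Xc).mulVec (unitVec h)
          = φ Xc (Sum.inr ()) (Sum.inr ()) := by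
        simp [dotProduct, Matrix.mulVec, unitVec, Fintype.sum_sum_type]
      rw [← he]
      exact ha
  -- linearity in η
  have hsum : ∀ η : Fin k → ℂ,
      (Matrix.vecMulVec (Sum.elim η 0) (star (unitVec k)) :
        Matrix (Fin k ⊕ Unit) (Fin k ⊕ Unit) ℂ)
      = ∑ j, η j • Matrix.vecMulVec (Sum.elim (Pi.single j 1) 0) (star (unitVec k)) := by
    intro η
    ext p q
    rcases p with a | ⟨⟩ <;>
      simp [Matrix.sum_apply, Matrix.smul_apply, smul_eq_mul, Matrix.vecMulVec_apply,
        Pi.single_apply, mul_ite, ite_mul, mul_zero, zero_mul, mul_one,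
        Finset.sum_ite_eq, Finset.sum_ite_eq', mul_comm, mul_left_comm]
  have hlin : ∀ (η : Fin k → ℂ) p q,
      φ (Matrix.vecMulVec (Sum.elim η 0) (star (unitVec k))) p q
        = ∑ j, η j *
          φ (Matrix.vecMulVec (Sum.elim (Pi.single j 1) 0) (star (unitVec k))) p q := by
    intro η p q
    rw [hsum η, _root_.map_sum]
    simp [Matrix.sum_apply, _root_.map_smul, Matrix.smul_apply, smul_eq_mul]
  refine ⟨Matrix.of (fun a j =>
      φ (Matrix.vecMulVec (Sum.elim (Pi.single j 1) 0) (star (unitVec k)))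
        (Sum.inl a) (Sum.inr ())),
    Matrix.of (fun b j =>
      star (φ (Matrix.vecMulVec (Sum.elim (Pi.single j 1) 0) (star (unitVec k)))
        (Sum.inr ()) (Sum.inl b))), ?_⟩
  intro η
  ext p q
  rcases p with a | ⟨⟩ <;> rcases q with b | ⟨⟩
  · rw [(key η).1 a b]
    simp [Matrix.add_apply, Matrix.vecMulVec_apply, unitVec]
  · rw [hlin η]
    simp [Matrix.add_apply, Matrix.vecMulVec_apply, unitVec, Matrix.mulVec, dotProduct,
      mul_comm]
  · rw [hlin η]
    simp [Matrix.add_apply, Matrix.vecMulVec_apply, unitVec, Matrix.mulVec, dotProduct,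
      star_sum, star_mul', star_star, mul_comm]
  · rw [(key η).2]
    simp [Matrix.add_apply, Matrix.vecMulVec_apply, unitVec]

end Paper
end
end

section
/- Let φ : M₃(ℂ) → M₃(ℂ) be a positive map determined by parameters b₁, b₂, c₁, c₂ ∈ ℂ and δ₁, δ₂, σ₁, σ₂ ≥ 0, with ε_i = |b_i| + |c_i|, given by φ(X) = [[(ε₁²+δ₁²)x₁₁ + σ₂²x₂₂, 0, b₁x₁₃ + c₁x₃₁], [0, (ε₂²+δ₂²)x₂₂ + σ₁²x₁₁, b₂x₂₃ + c₂x₃₂], [conj(b₁)x₃₁ + conj(c₁)x₁₃, conj(b₂)x₃₂ + conj(c₂)x₂₃, x₃₃]]. Set b⃗ = (|b₁|, |b₂|), c⃗ = (|c₁|, |c₂|), s = max(‖b⃗‖, ‖c⃗‖), δ = √(δ₁² + δ₂²), ε = √(ε₁² + ε₂²). If b⃗ ≠ 0, c⃗ ≠ 0, and s·√(ε² + δ²) < ‖b⃗‖² + ‖c⃗‖², then φ is not decomposable. -/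
open scoped ComplexOrder
open Matrix

noncomputable section
namespace Paper

/-- The map `M₃(ℂ) → M₃(ℂ)` determined by `b₁, b₂, c₁, c₂ ∈ ℂ` and
`δ₁, δ₂, σ₁, σ₂ ≥ 0`, with `εᵢ = |bᵢ| + |cᵢ|`. -/
def phi3 (b₁ b₂ c₁ c₂ : ℂ) (δ₁ δ₂ σ₁ σ₂ : ℝ) (X : Matrix (Fin 3) (Fin 3) ℂ) :
    Matrix (Fin 3) (Fin 3) ℂ :=
  !![(((‖b₁‖ + ‖c₁‖) ^ 2 + δ₁ ^ 2 : ℝ) : ℂ) * X 0 0 +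
        ((σ₂ ^ 2 : ℝ) : ℂ) * X 1 1,
      0, b₁ * X 0 2 + c₁ * X 2 0;
    0,
      (((‖b₂‖ + ‖c₂‖) ^ 2 + δ₂ ^ 2 : ℝ) : ℂ) * X 1 1 +
        ((σ₁ ^ 2 : ℝ) : ℂ) * X 0 0,
      b₂ * X 1 2 + c₂ * X 2 1;
    (starRingEnd ℂ) b₁ * X 2 0 + (starRingEnd ℂ) c₁ * X 0 2,
      (starRingEnd ℂ) b₂ * X 2 1 + (starRingEnd ℂ) c₂ * X 1 2, X 2 2]
set_option maxHeartbeats 2000000 in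
private lemma key (M : Matrix (Fin 3 × Fin 3) (Fin 3 × Fin 3) ℂ) (hM : M.PosSemidef)
    (m₁ m₂ n₁ n₂ : ℂ) (p₀ q₁ q₂ : ℝ)
    (hp : ‖m₁‖ ^ 2 + ‖m₂‖ ^ 2 = p₀)
    (hq1 : 1 ≤ q₁) (hq2 : 1 ≤ q₂)
    (hn1 : ‖n₁‖ ^ 2 ≤ q₁) (hn2 : ‖n₂‖ ^ 2 ≤ q₂) :
    0 ≤ M (0,0) (0,0) + M (1,1) (1,1) + (p₀:ℂ) * M (2,2) (2,2)
      + (q₁:ℂ) * (M (0,2) (0,2) + M (2,0) (2,0)) + (q₂:ℂ) * (M (1,2) (1,2) + M (2,1) (2,1))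
      + m₁ * M (2,2) (0,0) + (starRingEnd ℂ) m₁ * M (0,0) (2,2)
      + m₂ * M (2,2) (1,1) + (starRingEnd ℂ) m₂ * M (1,1) (2,2)
      + n₁ * M (2,0) (0,2) + (starRingEnd ℂ) n₁ * M (0,2) (2,0)
      + n₂ * M (2,1) (1,2) + (starRingEnd ℂ) n₂ * M (1,2) (2,1) := by
  have habs : ∀ z : ℂ, z * (starRingEnd ℂ) z = ((‖z‖ ^ 2 : ℝ) : ℂ) := fun z => by
    rw [Complex.mul_conj, Complex.normSq_eq_norm_sq]
  have hQ := hM.dotProduct_mulVec_nonneg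
  have hd : ∀ p, 0 ≤ M p p := fun p => by
    simpa [dotProduct, Matrix.mulVec, Pi.single_apply] using hQ (Pi.single p 1)
  have e1 : star (fun p : Fin 3 × Fin 3 => if p = (0,0) then (1:ℂ) else if p = (2,2) then (starRingEnd ℂ) m₁ else 0)
      ⬝ᵥ M *ᵥ (fun p : Fin 3 × Fin 3 => if p = (0,0) then (1:ℂ) else if p = (2,2) then (starRingEnd ℂ) m₁ else 0)
    = M (0,0) (0,0) + (starRingEnd ℂ) m₁ * M (0,0) (2,2) + m₁ * M (2,2) (0,0)
      + m₁ * (starRingEnd ℂ) m₁ * M (2,2) (2,2) := by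
    simp only [dotProduct, Matrix.mulVec, Fintype.sum_prod_type, Fin.sum_univ_three,
      Pi.star_apply]
    norm_num [Prod.ext_iff, Fin.ext_iff]
    ring
  have e2 : star (fun p : Fin 3 × Fin 3 => if p = (1,1) then (1:ℂ) else if p = (2,2) then (starRingEnd ℂ) m₂ else 0)
      ⬝ᵥ M *ᵥ (fun p : Fin 3 × Fin 3 => if p = (1,1) then (1:ℂ) else if p = (2,2) then (starRingEnd ℂ) m₂ else 0)
    = M (1,1) (1,1) + (starRingEnd ℂ) m₂ * M (1,1) (2,2) + m₂ * M (2,2) (1,1)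
      + m₂ * (starRingEnd ℂ) m₂ * M (2,2) (2,2) := by
    simp only [dotProduct, Matrix.mulVec, Fintype.sum_prod_type, Fin.sum_univ_three,
      Pi.star_apply]
    norm_num [Prod.ext_iff, Fin.ext_iff]
    ring
  have e3 : star (fun p : Fin 3 × Fin 3 => if p = (0,2) then (1:ℂ) else if p = (2,0) then (starRingEnd ℂ) n₁ else 0)
      ⬝ᵥ M *ᵥ (fun p : Fin 3 × Fin 3 => if p = (0,2) then (1:ℂ) else if p = (2,0) then (starRingEnd ℂ) n₁ else 0)
    = M (0,2) (0,2) + (starRingEnd ℂ) n₁ * M (0,2) (2,0) + n₁ * M (2,0) (0,2)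
      + n₁ * (starRingEnd ℂ) n₁ * M (2,0) (2,0) := by
    simp only [dotProduct, Matrix.mulVec, Fintype.sum_prod_type, Fin.sum_univ_three,
      Pi.star_apply]
    norm_num [Prod.ext_iff, Fin.ext_iff]
    ring
  have e4 : star (fun p : Fin 3 × Fin 3 => if p = (1,2) then (1:ℂ) else if p = (2,1) then (starRingEnd ℂ) n₂ else 0)
      ⬝ᵥ M *ᵥ (fun p : Fin 3 × Fin 3 => if p = (1,2) then (1:ℂ) else if p = (2,1) then (starRingEnd ℂ) n₂ else 0)
    = M (1,2) (1,2) + (starRingEnd ℂ) n₂ * M (1,2) (2,1) + n₂ * M (2,1) (1,2)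
      + n₂ * (starRingEnd ℂ) n₂ * M (2,1) (2,1) := by
    simp only [dotProduct, Matrix.mulVec, Fintype.sum_prod_type, Fin.sum_univ_three,
      Pi.star_apply]
    norm_num [Prod.ext_iff, Fin.ext_iff]
    ring
  have total : M (0,0) (0,0) + M (1,1) (1,1) + (p₀:ℂ) * M (2,2) (2,2)
      + (q₁:ℂ) * (M (0,2) (0,2) + M (2,0) (2,0)) + (q₂:ℂ) * (M (1,2) (1,2) + M (2,1) (2,1))
      + m₁ * M (2,2) (0,0) + (starRingEnd ℂ) m₁ * M (0,0) (2,2)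
      + m₂ * M (2,2) (1,1) + (starRingEnd ℂ) m₂ * M (1,1) (2,2)
      + n₁ * M (2,0) (0,2) + (starRingEnd ℂ) n₁ * M (0,2) (2,0)
      + n₂ * M (2,1) (1,2) + (starRingEnd ℂ) n₂ * M (1,2) (2,1)
    = (M (0,0) (0,0) + (starRingEnd ℂ) m₁ * M (0,0) (2,2) + m₁ * M (2,2) (0,0)
        + m₁ * (starRingEnd ℂ) m₁ * M (2,2) (2,2))
      + (M (1,1) (1,1) + (starRingEnd ℂ) m₂ * M (1,1) (2,2) + m₂ * M (2,2) (1,1)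
        + m₂ * (starRingEnd ℂ) m₂ * M (2,2) (2,2))
      + (M (0,2) (0,2) + (starRingEnd ℂ) n₁ * M (0,2) (2,0) + n₁ * M (2,0) (0,2)
        + n₁ * (starRingEnd ℂ) n₁ * M (2,0) (2,0))
      + (M (1,2) (1,2) + (starRingEnd ℂ) n₂ * M (1,2) (2,1) + n₂ * M (2,1) (1,2)
        + n₂ * (starRingEnd ℂ) n₂ * M (2,1) (2,1))
      + ((q₁ - 1 : ℝ) : ℂ) * M (0,2) (0,2)
      + ((q₁ - ‖n₁‖ ^ 2 : ℝ) : ℂ) * M (2,0) (2,0)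
      + ((q₂ - 1 : ℝ) : ℂ) * M (1,2) (1,2)
      + ((q₂ - ‖n₂‖ ^ 2 : ℝ) : ℂ) * M (2,1) (2,1) := by
    have hpC : ((‖m₁‖ ^ 2 : ℝ) : ℂ) + ((‖m₂‖ ^ 2 : ℝ) : ℂ) = (p₀ : ℂ) := by
      rw [← Complex.ofReal_add, hp]
    rw [habs m₁, habs m₂, habs n₁, habs n₂]
    push_cast
    push_cast at hpC
    linear_combination (-(M (2,2) (2,2))) * hpC
  rw [total]
  have c1 : (0:ℂ) ≤ ((q₁ - 1 : ℝ) : ℂ) := Complex.zero_le_real.2 (by linarith)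
  have c2 : (0:ℂ) ≤ ((q₁ - ‖n₁‖ ^ 2 : ℝ) : ℂ) := Complex.zero_le_real.2 (by linarith)
  have c3 : (0:ℂ) ≤ ((q₂ - 1 : ℝ) : ℂ) := Complex.zero_le_real.2 (by linarith)
  have c4 : (0:ℂ) ≤ ((q₂ - ‖n₂‖ ^ 2 : ℝ) : ℂ) := Complex.zero_le_real.2 (by linarith)
  refine add_nonneg (add_nonneg (add_nonneg (add_nonneg (add_nonneg (add_nonneg (add_nonneg ?_ ?_) ?_) ?_) ?_) ?_) ?_) ?_
  · rw [← e1]; exact hQ _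
  · rw [← e2]; exact hQ _
  · rw [← e3]; exact hQ _
  · rw [← e4]; exact hQ _
  · exact mul_nonneg c1 (hd _)
  · exact mul_nonneg c2 (hd _)
  · exact mul_nonneg c3 (hd _)
  · exact mul_nonneg c4 (hd _)



set_option maxHeartbeats 2000000 in
/-- If `phi3` is positive, `b⃗ = (|b₁|,|b₂|) ≠ 0`,
`c⃗ = (|c₁|,|c₂|) ≠ 0` and `s·√(ε² + δ²) < ‖b⃗‖² + ‖c⃗‖²`, where
`s = max(‖b⃗‖, ‖c⃗‖)`, `ε² = ε₁² + ε₂²`, `δ² = δ₁² + δ₂²`, then `phi3` is not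
decomposable. -/
theorem statement18 (b₁ b₂ c₁ c₂ : ℂ) (δ₁ δ₂ σ₁ σ₂ : ℝ)
    (hδ₁ : 0 ≤ δ₁) (hδ₂ : 0 ≤ δ₂) (hσ₁ : 0 ≤ σ₁) (hσ₂ : 0 ≤ σ₂)
    (hpos : IsPosMap (phi3 b₁ b₂ c₁ c₂ δ₁ δ₂ σ₁ σ₂))
    (hb : ¬(b₁ = 0 ∧ b₂ = 0)) (hc : ¬(c₁ = 0 ∧ c₂ = 0))
    (hineq :
      max (Real.sqrt (‖b₁‖ ^ 2 + ‖b₂‖ ^ 2))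
          (Real.sqrt (‖c₁‖ ^ 2 + ‖c₂‖ ^ 2)) *
        Real.sqrt
          (((‖b₁‖ + ‖c₁‖) ^ 2 +
              (‖b₂‖ + ‖c₂‖) ^ 2) +
            (δ₁ ^ 2 + δ₂ ^ 2)) <
      (‖b₁‖ ^ 2 + ‖b₂‖ ^ 2) +
        (‖c₁‖ ^ 2 + ‖c₂‖ ^ 2)) :
    ¬Decomposable (phi3 b₁ b₂ c₁ c₂ δ₁ δ₂ σ₁ σ₂) := by
  rintro ⟨φ₁, φ₂, hcp, hccp, hsum⟩
  have hb' := not_and_or.mp hb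
  have hc' := not_and_or.mp hc
  set nb := Real.sqrt (‖b₁‖ ^ 2 + ‖b₂‖ ^ 2) with hnb_def
  set nc := Real.sqrt (‖c₁‖ ^ 2 + ‖c₂‖ ^ 2) with hnc_def
  set p₀ := ((‖b₁‖ + ‖c₁‖) ^ 2 + (‖b₂‖ + ‖c₂‖) ^ 2) +
      (δ₁ ^ 2 + δ₂ ^ 2) with hp₀_def
  set R := Real.sqrt p₀ with hR_def
  have habpos : 0 < ‖b₁‖ ^ 2 + ‖b₂‖ ^ 2 := by
    rcases hb' with h | h
    · exact add_pos_of_pos_of_nonneg (pow_pos (norm_pos_iff.mpr h) 2) (sq_nonneg _)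
    · exact add_pos_of_nonneg_of_pos (sq_nonneg _) (pow_pos (norm_pos_iff.mpr h) 2)
  have hacpos : 0 < ‖c₁‖ ^ 2 + ‖c₂‖ ^ 2 := by
    rcases hc' with h | h
    · exact add_pos_of_pos_of_nonneg (pow_pos (norm_pos_iff.mpr h) 2) (sq_nonneg _)
    · exact add_pos_of_nonneg_of_pos (sq_nonneg _) (pow_pos (norm_pos_iff.mpr h) 2)
  have hnb : 0 < nb := by rw [hnb_def]; exact Real.sqrt_pos.mpr habpos
  have hnc : 0 < nc := by rw [hnc_def]; exact Real.sqrt_pos.mpr hacpos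
  have hnbsq : nb ^ 2 = ‖b₁‖ ^ 2 + ‖b₂‖ ^ 2 := by
    rw [hnb_def]; exact Real.sq_sqrt habpos.le
  have hncsq : nc ^ 2 = ‖c₁‖ ^ 2 + ‖c₂‖ ^ 2 := by
    rw [hnc_def]; exact Real.sq_sqrt hacpos.le
  have hp₀pos : 0 < p₀ := by
    rw [hp₀_def]
    rcases hb' with h | h
    · have h1 : 0 < ‖b₁‖ + ‖c₁‖ :=
        add_pos_of_pos_of_nonneg (norm_pos_iff.mpr h) (norm_nonneg c₁)
      exact add_pos_of_pos_of_nonneg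
        (add_pos_of_pos_of_nonneg (pow_pos h1 2) (sq_nonneg _))
        (add_nonneg (sq_nonneg δ₁) (sq_nonneg δ₂))
    · have h1 : 0 < ‖b₂‖ + ‖c₂‖ :=
        add_pos_of_pos_of_nonneg (norm_pos_iff.mpr h) (norm_nonneg c₂)
      exact add_pos_of_pos_of_nonneg
        (add_pos_of_nonneg_of_pos (sq_nonneg _) (pow_pos h1 2))
        (add_nonneg (sq_nonneg δ₁) (sq_nonneg δ₂))
  have hR0 : 0 < R := by rw [hR_def]; exact Real.sqrt_pos.mpr hp₀pos
  have hRsq : R ^ 2 = p₀ := by rw [hR_def]; exact Real.sq_sqrt hp₀pos.le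
  have hsmax : 0 < max nb nc := lt_of_lt_of_le hnb (le_max_left _ _)
  have hRlt : R < nb + nc := by
    have h1 : max nb nc * R < max nb nc * (nb + nc) := by
      calc max nb nc * R
          < (‖b₁‖ ^ 2 + ‖b₂‖ ^ 2) +
              (‖c₁‖ ^ 2 + ‖c₂‖ ^ 2) := hineq
        _ = nb ^ 2 + nc ^ 2 := by rw [hnbsq, hncsq]
        _ ≤ max nb nc * (nb + nc) := by
            have e1 : nb ^ 2 ≤ max nb nc * nb := by
              rw [sq]; exact mul_le_mul_of_nonneg_right (le_max_left _ _) hnb.le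
            have e2 : nc ^ 2 ≤ max nb nc * nc := by
              rw [sq]; exact mul_le_mul_of_nonneg_right (le_max_right _ _) hnc.le
            have e3 : max nb nc * (nb + nc) = max nb nc * nb + max nb nc * nc := by ring
            linarith [e1, e2]
    exact lt_of_mul_lt_mul_left h1 hsmax.le
  set lb := R / nb with hlb_def
  set lc := R / nc with hlc_def
  have hlb0 : 0 ≤ lb := div_nonneg hR0.le hnb.le
  have hlc0 : 0 ≤ lc := div_nonneg hR0.le hnc.le
  have hlbnb : lb * nb = R := div_mul_cancel₀ R hnb.ne'
  have hlcnc : lc * nc = R := div_mul_cancel₀ R hnc.ne'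
  -- the coupling scalars
  set m₁ : ℂ := ((-lb : ℝ) : ℂ) * b₁ with hm₁_def
  set m₂ : ℂ := ((-lb : ℝ) : ℂ) * b₂ with hm₂_def
  set n₁ : ℂ := ((-lc : ℝ) : ℂ) * (starRingEnd ℂ) c₁ with hn₁_def
  set n₂ : ℂ := ((-lc : ℝ) : ℂ) * (starRingEnd ℂ) c₂ with hn₂_def
  have habsm₁ : ‖m₁‖ = lb * ‖b₁‖ := by
    rw [hm₁_def, norm_mul, Complex.norm_real, Real.norm_eq_abs, abs_neg, abs_of_nonneg hlb0]
  have habsm₂ : ‖m₂‖ = lb * ‖b₂‖ := by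
    rw [hm₂_def, norm_mul, Complex.norm_real, Real.norm_eq_abs, abs_neg, abs_of_nonneg hlb0]
  have habsn₁ : ‖n₁‖ = lc * ‖c₁‖ := by
    rw [hn₁_def, norm_mul, Complex.norm_real, Real.norm_eq_abs, abs_neg, abs_of_nonneg hlc0, Complex.norm_conj]
  have habsn₂ : ‖n₂‖ = lc * ‖c₂‖ := by
    rw [hn₂_def, norm_mul, Complex.norm_real, Real.norm_eq_abs, abs_neg, abs_of_nonneg hlc0, Complex.norm_conj]
  set q₁ := 1 + (lb * ‖b₁‖) ^ 2 + (lc * ‖c₁‖) ^ 2 with hq₁_def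
  set q₂ := 1 + (lb * ‖b₂‖) ^ 2 + (lc * ‖c₂‖) ^ 2 with hq₂_def
  have hq1 : 1 ≤ q₁ := by
    rw [hq₁_def]; linarith [sq_nonneg (lb * ‖b₁‖), sq_nonneg (lc * ‖c₁‖)]
  have hq2 : 1 ≤ q₂ := by
    rw [hq₂_def]; linarith [sq_nonneg (lb * ‖b₂‖), sq_nonneg (lc * ‖c₂‖)]
  have hpK1 : ‖m₁‖ ^ 2 + ‖m₂‖ ^ 2 = p₀ := by
    rw [habsm₁, habsm₂]
    calc (lb * ‖b₁‖) ^ 2 + (lb * ‖b₂‖) ^ 2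
        = lb ^ 2 * (‖b₁‖ ^ 2 + ‖b₂‖ ^ 2) := by ring
      _ = (lb * nb) ^ 2 := by rw [← hnbsq]; ring
      _ = p₀ := by rw [hlbnb]; exact hRsq
  have hpK2 : ‖(starRingEnd ℂ) n₁‖ ^ 2 + ‖(starRingEnd ℂ) n₂‖ ^ 2 = p₀ := by
    rw [Complex.norm_conj, Complex.norm_conj, habsn₁, habsn₂]
    calc (lc * ‖c₁‖) ^ 2 + (lc * ‖c₂‖) ^ 2
        = lc ^ 2 * (‖c₁‖ ^ 2 + ‖c₂‖ ^ 2) := by ring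
      _ = (lc * nc) ^ 2 := by rw [← hncsq]; ring
      _ = p₀ := by rw [hlcnc]; exact hRsq
  have hnK1a : ‖n₁‖ ^ 2 ≤ q₁ := by
    rw [habsn₁, hq₁_def]; linarith [sq_nonneg (lb * ‖b₁‖)]
  have hnK1b : ‖n₂‖ ^ 2 ≤ q₂ := by
    rw [habsn₂, hq₂_def]; linarith [sq_nonneg (lb * ‖b₂‖)]
  have hnK2a : ‖(starRingEnd ℂ) m₁‖ ^ 2 ≤ q₁ := by
    rw [Complex.norm_conj, habsm₁, hq₁_def]; linarith [sq_nonneg (lc * ‖c₁‖)]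
  have hnK2b : ‖(starRingEnd ℂ) m₂‖ ^ 2 ≤ q₂ := by
    rw [Complex.norm_conj, habsm₂, hq₂_def]; linarith [sq_nonneg (lc * ‖c₂‖)]
  have K1 := key (choi (⇑φ₁)) hcp m₁ m₂ n₁ n₂ p₀ q₁ q₂ hpK1 hq1 hq2 hnK1a hnK1b
  have hccp' : (choi fun X => φ₂ Xᵀ).PosSemidef := hccp
  have K2 := key (choi fun X => φ₂ Xᵀ) hccp'
    ((starRingEnd ℂ) n₁) ((starRingEnd ℂ) n₂) ((starRingEnd ℂ) m₁) ((starRingEnd ℂ) m₂)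
    p₀ q₁ q₂ hpK2 hq1 hq2 hnK2a hnK2b
  have hK := add_nonneg K1 K2
  have hfinal : (0:ℂ) ≤ ((2 * p₀ - 2 * R * (nb + nc) : ℝ) : ℂ) := by
    refine hK.trans_eq ?_

    have hT : ∀ i j : Fin 3, (Matrix.single i j (1:ℂ))ᵀ = Matrix.single j i 1 := by
      intro i j; ext k l
      simp [Matrix.single, Matrix.transpose_apply, and_comm]
    have hφ1 : ∀ i j k l : Fin 3, φ₁ (Matrix.single i j 1) k l
        = phi3 b₁ b₂ c₁ c₂ δ₁ δ₂ σ₁ σ₂ (Matrix.single i j 1) k l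
          - φ₂ (Matrix.single i j 1) k l := by
      intro i j k l
      rw [hsum]
      simp [Matrix.add_apply]
    have hb1c : b₁ * (starRingEnd ℂ) b₁ = (‖b₁‖ : ℂ) ^ 2 := by
      rw [Complex.mul_conj, Complex.normSq_eq_norm_sq]; push_cast; ring
    have hb2c : b₂ * (starRingEnd ℂ) b₂ = (‖b₂‖ : ℂ) ^ 2 := by
      rw [Complex.mul_conj, Complex.normSq_eq_norm_sq]; push_cast; ring
    have hc1c : c₁ * (starRingEnd ℂ) c₁ = (‖c₁‖ : ℂ) ^ 2 := by
      rw [Complex.mul_conj, Complex.normSq_eq_norm_sq]; push_cast; ring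
    have hc2c : c₂ * (starRingEnd ℂ) c₂ = (‖c₂‖ : ℂ) ^ 2 := by
      rw [Complex.mul_conj, Complex.normSq_eq_norm_sq]; push_cast; ring
    have hnbC : (‖b₁‖ : ℂ) ^ 2 + (‖b₂‖ : ℂ) ^ 2 = (nb : ℂ) ^ 2 := by
      exact_mod_cast congrArg Complex.ofReal hnbsq.symm
    have hncC : (‖c₁‖ : ℂ) ^ 2 + (‖c₂‖ : ℂ) ^ 2 = (nc : ℂ) ^ 2 := by
      exact_mod_cast congrArg Complex.ofReal hncsq.symm
    have hlbC : (lb : ℂ) * (nb : ℂ) = (R : ℂ) := by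
      exact_mod_cast congrArg Complex.ofReal hlbnb
    have hlcC : (lc : ℂ) * (nc : ℂ) = (R : ℂ) := by
      exact_mod_cast congrArg Complex.ofReal hlcnc
    have hp₀C : ((‖b₁‖ : ℂ) + (‖c₁‖ : ℂ)) ^ 2
        + ((‖b₂‖ : ℂ) + (‖c₂‖ : ℂ)) ^ 2
        + (δ₁ : ℂ) ^ 2 + (δ₂ : ℂ) ^ 2 = (p₀ : ℂ) := by
      rw [hp₀_def]; push_cast; ring
    simp only [choi, Matrix.of_apply]
    simp only [hT, hφ1]
    rw [hm₁_def, hm₂_def, hn₁_def, hn₂_def]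
    norm_num [phi3, Matrix.single, Fin.ext_iff, _root_.map_mul, Complex.conj_ofReal,
      Complex.conj_conj, Matrix.vecHead, Matrix.vecTail, Function.comp]
    push_cast
    linear_combination hp₀C + (-2*((lb:ℝ):ℂ)) * hb1c + (-2*((lb:ℝ):ℂ)) * hb2c
      + (-2*((lc:ℝ):ℂ)) * hc1c + (-2*((lc:ℝ):ℂ)) * hc2c
      + (-2*((lb:ℝ):ℂ)) * hnbC + (-2*((lc:ℝ):ℂ)) * hncC
      + (-2*((nb:ℝ):ℂ)) * hlbC + (-2*((nc:ℝ):ℂ)) * hlcC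

  have hfinal' : (0:ℝ) ≤ 2 * p₀ - 2 * R * (nb + nc) := Complex.zero_le_real.mp hfinal
  have hposs : 0 < 2 * R * ((nb + nc) - R) :=
    mul_pos (by linarith) (by linarith)
  linarith [hfinal', hposs, hRsq, sq_abs R, (by ring : 2 * R * ((nb + nc) - R) = 2 * (R * nb) + 2 * (R * nc) - 2 * R ^ 2), (by ring : 2 * p₀ - 2 * R * (nb + nc) = 2 * p₀ - 2 * (R * nb) - 2 * (R * nc))]


end Paper
end
end
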